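/- For every n ≥ 1: (i) the matrix A_n⁰ is symmetric positive definite, its eigenvalues are exactly the zeros of P_{n+1}^(0)(·;ζ) together with the zeros of P_n^(1)(·;ζ), and in particular every eigenvalue of A_n⁰ is strictly greater than 1; and (ii) for every u ∈ (−1,1), with γ := (1−u²)^{−1/2}, the symmetric matrix γ·(A_n⁰ − u·A_n¹) is positive definite. -/

import Mathlib

open MeasureTheory Polynomial


noncomputable def besselK (n : ℕ) (ζ : ℝ) : ℝ :=
  ∫ t in Set.Ioi (0 : ℝ), Real.cosh ((n : ℝ) * t) * Real.exp (-ζ * Real.cosh t)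

noncomputable def Gfun (ζ : ℝ) : ℝ := besselK 2 ζ / besselK 1 ζ

noncomputable def wgt (ℓ : ℕ) (ζ x : ℝ) : ℝ :=
  (x ^ 2 - 1) ^ ((ℓ : ℝ) - 1 / 2) * Real.exp (-ζ * x) / besselK 1 ζ

noncomputable def jacobiSq (a b : ℕ → ℝ) (n : ℕ) :
    Matrix (Fin (n + 1)) (Fin (n + 1)) ℝ :=
  fun i j =>
    if (i : ℕ) = (j : ℕ) then b (i : ℕ)
    else if (i : ℕ) + 1 = (j : ℕ) ∨ (j : ℕ) + 1 = (i : ℕ) then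
      a (min (i : ℕ) (j : ℕ))
    else 0

noncomputable def jacobiRect (p q r : ℕ → ℝ) (n : ℕ) :
    Matrix (Fin (n + 1)) (Fin (n + 2)) ℝ :=
  fun i j =>
    if (j : ℕ) = (i : ℕ) then p (i : ℕ)
    else if (j : ℕ) = (i : ℕ) + 1 then q (i : ℕ)
    else if (j : ℕ) = (i : ℕ) + 2 then r ((i : ℕ) + 1)
    else 0

namespace Stmt19

lemma fin_sum_ite {m t : ℕ} (g : Fin m → ℝ) :
    (∑ j : Fin m, if (j : ℕ) = t then g j else 0) =
      if h : t < m then g ⟨t, h⟩ else 0 := by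
  split
  · next h =>
    rw [Finset.sum_eq_single (⟨t, h⟩ : Fin m)]
    · simp
    · intro j _ hj
      rw [if_neg]
      simpa [Fin.ext_iff] using hj
    · simp
  · next h =>
    apply Finset.sum_eq_zero
    intro j _
    rw [if_neg]
    have := j.isLt
    omega

section OPS

variable (M : Polynomial ℝ →ₗ[ℝ] ℝ) (P : ℕ → Polynomial ℝ) (lc : ℕ → ℝ)

lemma P_zero_eq (hdeg : ∀ n, (P n).natDegree = n) (hlc : ∀ n, (P n).leadingCoeff = lc n) :
    P 0 = C (lc 0) := by
  obtain ⟨a, ha⟩ := Polynomial.natDegree_eq_zero.mp (hdeg 0)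
  rw [← ha]
  have := hlc 0
  rw [← ha] at this
  rw [← this]
  simp [← ha]

lemma expandP (hdeg : ∀ n, (P n).natDegree = n) (hlc : ∀ n, (P n).leadingCoeff = lc n)
    (hlcne : ∀ n, lc n ≠ 0) :
    ∀ (Nn : ℕ) (f : Polynomial ℝ), f.natDegree ≤ Nn →
      ∃ c : ℕ → ℝ, f = ∑ i ∈ Finset.range (Nn + 1), C (c i) * P i := by
  intro Nn
  induction Nn with
  | zero =>
    intro f hf
    refine ⟨fun _ => f.coeff 0 / lc 0, ?_⟩
    have hfC : f = C (f.coeff 0) := Polynomial.eq_C_of_natDegree_le_zero hf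
    rw [Finset.sum_range_one, P_zero_eq P lc hdeg hlc, ← C_mul,
      div_mul_cancel₀ _ (hlcne 0)]
    exact hfC
  | succ Nn ih =>
    intro f hf
    set t := f.coeff (Nn + 1) / lc (Nn + 1) with ht
    set g := f - C t * P (Nn + 1) with hg
    have hgd : g.natDegree ≤ Nn := by
      rw [Polynomial.natDegree_le_iff_coeff_eq_zero]
      intro m hm
      rcases eq_or_lt_of_le (Nat.succ_le_of_lt hm) with hm' | hm'
      · have hcoeffP : (P (Nn + 1)).coeff (Nn + 1) = lc (Nn + 1) := by
          rw [← hlc (Nn + 1), Polynomial.leadingCoeff, hdeg (Nn + 1)]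
        simp only [hg, Polynomial.coeff_sub, Polynomial.coeff_C_mul, ← hm', hcoeffP, ht]
        rw [div_mul_cancel₀ _ (hlcne _), show Nn.succ = Nn + 1 from rfl, sub_self]
      · have h1 : f.coeff m = 0 := Polynomial.coeff_eq_zero_of_natDegree_lt (lt_of_le_of_lt hf hm')
        have h2 : (P (Nn + 1)).coeff m = 0 :=
          Polynomial.coeff_eq_zero_of_natDegree_lt (by rw [hdeg]; exact hm')
        simp [hg, h1, h2]
    obtain ⟨c, hc⟩ := ih g hgd
    refine ⟨Function.update c (Nn + 1) t, ?_⟩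
    rw [Finset.sum_range_succ, Function.update_self]
    have : ∑ i ∈ Finset.range (Nn + 1), C (Function.update c (Nn + 1) t i) * P i
        = ∑ i ∈ Finset.range (Nn + 1), C (c i) * P i := by
      apply Finset.sum_congr rfl
      intro i hi
      rw [Function.update_of_ne (by simp at hi; omega)]
    rw [this, ← hc, hg]
    ring


lemma M_C_mul (t : ℝ) (f : Polynomial ℝ) : M (C t * f) = t * M f := by
  rw [← Polynomial.smul_eq_C_mul, _root_.map_smul, smul_eq_mul]

lemma Mexp (c : ℕ → ℝ) (s : Finset ℕ) (m : ℕ)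
    (horth : ∀ m n, M (P m * P n) = if m = n then (1:ℝ) else 0) :
    M ((∑ i ∈ s, C (c i) * P i) * P m) = ∑ i ∈ s, c i * (if i = m then (1:ℝ) else 0) := by
  rw [Finset.sum_mul, map_sum]
  apply Finset.sum_congr rfl
  intro i _
  rw [mul_assoc, M_C_mul, horth]

lemma orth_lt (hdeg : ∀ n, (P n).natDegree = n) (hlc : ∀ n, (P n).leadingCoeff = lc n)
    (hlcne : ∀ n, lc n ≠ 0)
    (horth : ∀ m n, M (P m * P n) = if m = n then (1:ℝ) else 0)
    {g : Polynomial ℝ} {m : ℕ} (hgm : g.natDegree < m) :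
    M (g * P m) = 0 := by
  obtain ⟨c, hc⟩ := expandP P lc hdeg hlc hlcne g.natDegree g le_rfl
  rw [hc, Mexp M P c _ m horth]
  apply Finset.sum_eq_zero
  intro i hi
  simp only [Finset.mem_range] at hi
  rw [if_neg (by omega), mul_zero]

lemma coeff_P (hdeg : ∀ n, (P n).natDegree = n) (hlc : ∀ n, (P n).leadingCoeff = lc n)
    (n : ℕ) : (P n).coeff n = lc n := by
  rw [← hlc n, Polynomial.leadingCoeff, hdeg n]

lemma FC (hdeg : ∀ n, (P n).natDegree = n) (hlc : ∀ n, (P n).leadingCoeff = lc n)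
    (hlcne : ∀ n, lc n ≠ 0)
    (horth : ∀ m n, M (P m * P n) = if m = n then (1:ℝ) else 0)
    {g : Polynomial ℝ} {m : ℕ} (hgm : g.natDegree ≤ m) :
    M (g * P m) = g.coeff m / lc m := by
  set t := g.coeff m / lc m with ht
  set g' := g - C t * P m with hg'
  have hgg : g = g' + C t * P m := by rw [hg']; ring
  have hco : g'.coeff m = 0 := by
    simp only [hg', Polynomial.coeff_sub, Polynomial.coeff_C_mul,
      coeff_P P lc hdeg hlc, ht, div_mul_cancel₀ _ (hlcne m), sub_self]
  have hMg' : M (g' * P m) = 0 := by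
    rcases eq_or_ne g' 0 with h0 | h0
    · rw [h0, zero_mul, map_zero]
    · apply orth_lt M P lc hdeg hlc hlcne horth
      have hle : g'.natDegree ≤ m := by
        refine le_trans (Polynomial.natDegree_sub_le _ _) (max_le hgm ?_)
        exact le_trans (Polynomial.natDegree_C_mul_le _ _) (le_of_eq (hdeg m))
      rcases eq_or_lt_of_le hle with h | h
      · exfalso
        apply h0
        have := Polynomial.leadingCoeff_ne_zero.mpr h0
        rw [Polynomial.leadingCoeff, h] at this
        exact absurd hco this
      · exact h
  rw [hgg, add_mul, map_add, hMg', zero_add, mul_assoc, M_C_mul, horth, if_pos rfl, mul_one]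

lemma eqZero (hdeg : ∀ n, (P n).natDegree = n) (hlc : ∀ n, (P n).leadingCoeff = lc n)
    (hlcne : ∀ n, lc n ≠ 0)
    (horth : ∀ m n, M (P m * P n) = if m = n then (1:ℝ) else 0)
    {h : Polynomial ℝ} (hall : ∀ j, M (h * P j) = 0) : h = 0 := by
  obtain ⟨c, hc⟩ := expandP P lc hdeg hlc hlcne h.natDegree h le_rfl
  have hcj : ∀ j ∈ Finset.range (h.natDegree + 1), c j = 0 := by
    intro j hj
    have := hall j
    rw [hc, Mexp M P c _ j horth] at this
    rw [Finset.sum_eq_single j] at this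
    · simpa using this
    · intro i _ hij; rw [if_neg hij, mul_zero]
    · intro hju; exact absurd hj hju
  rw [hc]
  apply Finset.sum_eq_zero
  intro i hi
  rw [hcj i hi, map_zero, zero_mul]


lemma Mx_high (hdeg : ∀ n, (P n).natDegree = n) (hlc : ∀ n, (P n).leadingCoeff = lc n)
    (hlcne : ∀ n, lc n ≠ 0)
    (horth : ∀ m n, M (P m * P n) = if m = n then (1:ℝ) else 0)
    {i j : ℕ} (hij : i + 1 < j) : M (X * P i * P j) = 0 := by
  apply orth_lt M P lc hdeg hlc hlcne horth
  calc (X * P i).natDegree ≤ X.natDegree + (P i).natDegree := Polynomial.natDegree_mul_le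
  _ < j := by rw [Polynomial.natDegree_X, hdeg]; omega

lemma Mx_adj (hdeg : ∀ n, (P n).natDegree = n) (hlc : ∀ n, (P n).leadingCoeff = lc n)
    (hlcne : ∀ n, lc n ≠ 0)
    (horth : ∀ m n, M (P m * P n) = if m = n then (1:ℝ) else 0)
    (i : ℕ) : M (X * P i * P (i + 1)) = lc i / lc (i + 1) := by
  rw [FC M P lc hdeg hlc hlcne horth
    (le_trans Polynomial.natDegree_mul_le (by rw [Polynomial.natDegree_X, hdeg]; omega))]
  rw [Polynomial.coeff_X_mul, coeff_P P lc hdeg hlc]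

lemma trival (hdeg : ∀ n, (P n).natDegree = n) (hlc : ∀ n, (P n).leadingCoeff = lc n)
    (hlcne : ∀ n, lc n ≠ 0)
    (horth : ∀ m n, M (P m * P n) = if m = n then (1:ℝ) else 0)
    (i j : ℕ) :
    M (X * P i * P j) = (if i = j then M (X * P i * P i)
      else if i + 1 = j ∨ j + 1 = i then lc (min i j) / lc (min i j + 1) else 0) := by
  have hcomm : ∀ k l : ℕ, X * P k * P l = X * P l * P k := fun k l => by ring
  rcases Nat.lt_trichotomy i j with h | h | h
  · rcases eq_or_lt_of_le (Nat.succ_le_of_lt h) with h' | h'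
    · rw [if_neg (by omega), if_pos (by omega), ← h', Nat.min_def, if_pos (by omega)]
      exact Mx_adj M P lc hdeg hlc hlcne horth i
    · rw [if_neg (by omega), if_neg (by omega)]
      exact Mx_high M P lc hdeg hlc hlcne horth h'
  · rw [if_pos h, h]
  · rcases eq_or_lt_of_le (Nat.succ_le_of_lt h) with h' | h'
    · rw [if_neg (by omega), if_pos (by omega), Nat.min_def, if_neg (by omega), hcomm, ← h']
      exact Mx_adj M P lc hdeg hlc hlcne horth j
    · rw [if_neg (by omega), if_neg (by omega), hcomm]
      exact Mx_high M P lc hdeg hlc hlcne horth h'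

lemma recEval (hdeg : ∀ n, (P n).natDegree = n) (hlc : ∀ n, (P n).leadingCoeff = lc n)
    (hlcne : ∀ n, lc n ≠ 0)
    (horth : ∀ m n, M (P m * P n) = if m = n then (1:ℝ) else 0)
    (a b : ℕ → ℝ) (ha : ∀ n, a n = lc n / lc (n + 1)) (hb : ∀ n, b n = M (X * P n * P n))
    (n : ℕ) (x : ℝ) :
    x * (P n).eval x = a n * (P (n + 1)).eval x + b n * (P n).eval x +
      (if n = 0 then 0 else a (n - 1) * (P (n - 1)).eval x) := by
  have key : X * P n = C (a n) * P (n + 1) + C (b n) * P n +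
      (if n = 0 then 0 else C (a (n - 1)) * P (n - 1)) := by
    have hz : X * P n - (C (a n) * P (n + 1) + C (b n) * P n +
        (if n = 0 then 0 else C (a (n - 1)) * P (n - 1))) = 0 := by
      apply eqZero M P lc hdeg hlc hlcne horth
      intro j
      have expand : (X * P n - (C (a n) * P (n + 1) + C (b n) * P n +
          (if n = 0 then 0 else C (a (n - 1)) * P (n - 1)))) * P j
          = X * P n * P j - (C (a n) * (P (n + 1) * P j) + C (b n) * (P n * P j) +
            (if n = 0 then 0 else C (a (n - 1)) * (P (n - 1) * P j))) := by
        split <;> ring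
      rw [expand, map_sub, map_add, map_add, M_C_mul, M_C_mul, horth, horth,
        trival M P lc hdeg hlc hlcne horth n j]
      have hMite : M (if n = 0 then 0 else C (a (n - 1)) * (P (n - 1) * P j))
          = if n = 0 then 0 else a (n - 1) * (if n - 1 = j then (1:ℝ) else 0) := by
        split
        · exact map_zero M
        · rw [M_C_mul, horth]
      rw [hMite]
      simp only [ha, hb]
      split_ifs <;>
        first
          | omega
          | ring1
          | (rw [show min n j = n from by omega]; ring1)
          | (rw [show min n j = n - 1 from by omega]; ring1)
    linear_combination hz
  have := congrArg (Polynomial.eval x) key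
  simpa [apply_ite (Polynomial.eval x)] using this

end OPS

noncomputable def ext (n : ℕ) (v : Fin (n + 1) → ℝ) : ℕ → ℝ :=
  fun k => if h : k < n + 1 then v ⟨k, h⟩ else 0

lemma ext_lt {n : ℕ} (v : Fin (n + 1) → ℝ) {k : ℕ} (h : k < n + 1) :
    ext n v k = v ⟨k, h⟩ := dif_pos h

lemma ext_ge {n : ℕ} (v : Fin (n + 1) → ℝ) {k : ℕ} (h : ¬ k < n + 1) :
    ext n v k = 0 := dif_neg h

lemma jac_mulVec (a b : ℕ → ℝ) (n : ℕ) (v : Fin (n + 1) → ℝ) (i : Fin (n + 1)) :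
    (jacobiSq a b n).mulVec v i =
      b (i : ℕ) * ext n v (i : ℕ) + a (i : ℕ) * ext n v ((i : ℕ) + 1) +
        (if (i : ℕ) = 0 then 0 else a ((i : ℕ) - 1) * ext n v ((i : ℕ) - 1)) := by
  have hm : (jacobiSq a b n).mulVec v i = ∑ j : Fin (n + 1), jacobiSq a b n i j * v j := rfl
  have hterm : ∀ j : Fin (n + 1), jacobiSq a b n i j * v j =
      (if (j : ℕ) = (i : ℕ) then b (i : ℕ) * v j else 0) +
      (if (j : ℕ) = (i : ℕ) + 1 then a (i : ℕ) * v j else 0) +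
      (if (j : ℕ) = (i : ℕ) - 1 ∧ (i : ℕ) ≠ 0 then a ((i : ℕ) - 1) * v j else 0) := by
    intro j
    unfold jacobiSq
    split_ifs <;>
      first
        | ring1
        | omega
        | (rw [show min (i : ℕ) (j : ℕ) = (i : ℕ) from by omega]; ring1)
        | (rw [show min (i : ℕ) (j : ℕ) = (i : ℕ) - 1 from by omega]; ring1)
  have h3 : (∑ j : Fin (n + 1),
      if (j : ℕ) = (i : ℕ) - 1 ∧ (i : ℕ) ≠ 0 then a ((i : ℕ) - 1) * v j else 0)
      = (if (i : ℕ) = 0 then 0 else a ((i : ℕ) - 1) * ext n v ((i : ℕ) - 1)) := by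
    by_cases hi0 : (i : ℕ) = 0
    · rw [if_pos hi0]
      apply Finset.sum_eq_zero
      intro j _
      rw [if_neg (by simp [hi0])]
    · rw [if_neg hi0]
      have hcong : ∀ j : Fin (n + 1),
          (if (j : ℕ) = (i : ℕ) - 1 ∧ (i : ℕ) ≠ 0 then a ((i : ℕ) - 1) * v j else 0)
          = (if (j : ℕ) = (i : ℕ) - 1 then a ((i : ℕ) - 1) * v j else 0) := by
        intro j
        refine if_congr ⟨fun h => h.1, fun h => ⟨h, hi0⟩⟩ rfl rfl
      rw [Finset.sum_congr rfl (fun j _ => hcong j), fin_sum_ite,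
        dif_pos (show (i : ℕ) - 1 < n + 1 by omega),
        ext_lt v (show (i : ℕ) - 1 < n + 1 by omega)]
  rw [hm, Finset.sum_congr rfl (fun j _ => hterm j), Finset.sum_add_distrib,
    Finset.sum_add_distrib, fin_sum_ite, fin_sum_ite, h3]
  congr 1
  congr 1
  · rw [dif_pos i.isLt, ext_lt v i.isLt]
  · by_cases h : (i : ℕ) + 1 < n + 1
    · rw [dif_pos h, ext_lt v h]
    · rw [dif_neg h, ext_ge v h, mul_zero]

lemma eig_iff (M : Polynomial ℝ →ₗ[ℝ] ℝ) (P : ℕ → Polynomial ℝ) (lc : ℕ → ℝ)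
    (hdeg : ∀ n, (P n).natDegree = n) (hlc : ∀ n, (P n).leadingCoeff = lc n)
    (hlcne : ∀ n, lc n ≠ 0)
    (horth : ∀ m n, M (P m * P n) = if m = n then (1:ℝ) else 0)
    (a b : ℕ → ℝ) (ha : ∀ n, a n = lc n / lc (n + 1)) (hb : ∀ n, b n = M (X * P n * P n))
    (n : ℕ) (μ : ℝ) :
    (∃ v : Fin (n + 1) → ℝ, v ≠ 0 ∧ (jacobiSq a b n).mulVec v = μ • v) ↔
      (P (n + 1)).eval μ = 0 := by
  have hane : ∀ k, a k ≠ 0 := fun k => by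
    rw [ha]; exact div_ne_zero (hlcne k) (hlcne (k + 1))
  set PP : ℕ → ℝ := fun k => (P k).eval μ with hPP
  have hrec : ∀ k, μ * PP k = a k * PP (k + 1) + b k * PP k +
      (if k = 0 then 0 else a (k - 1) * PP (k - 1)) :=
    fun k => recEval M P lc hdeg hlc hlcne horth a b ha hb k μ
  have hPP0 : PP 0 = lc 0 := by
    simp only [hPP, P_zero_eq P lc hdeg hlc, Polynomial.eval_C]
  constructor
  · rintro ⟨v, hv0, hv⟩
    set V : ℕ → ℝ := ext n v with hV
    have hVc : ∀ i : Fin (n + 1), V (i : ℕ) = v i := fun i => by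
      rw [hV, ext_lt v i.isLt]
    have hEqN : ∀ k, k < n + 1 → b k * V k + a k * V (k + 1) +
        (if k = 0 then 0 else a (k - 1) * V (k - 1)) = μ * V k := by
      intro k hk
      have h1 := congrFun hv ⟨k, hk⟩
      rw [jac_mulVec, Pi.smul_apply, smul_eq_mul] at h1
      have h2 : ((⟨k, hk⟩ : Fin (n + 1)) : ℕ) = k := rfl
      rw [h2] at h1
      rw [h1, hVc ⟨k, hk⟩]
    have key : ∀ k, k ≤ n → PP 0 * V k = V 0 * PP k := by
      intro k
      induction k using Nat.strong_induction_on with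
      | _ k ih =>
        intro hk
        match k, hk with
        | 0, _ => exact mul_comm _ _
        | 1, h1 =>
          have e0 := hEqN 0 (by omega)
          rw [if_pos rfl, add_zero] at e0
          have r0 := hrec 0
          rw [if_pos rfl, add_zero] at r0
          refine mul_left_cancel₀ (hane 0) ?_
          linear_combination PP 0 * e0 + V 0 * r0
        | (k + 2), hk2 =>
          have e := hEqN (k + 1) (by omega)
          rw [if_neg (by omega), Nat.add_sub_cancel] at e
          have r := hrec (k + 1)
          rw [if_neg (by omega), Nat.add_sub_cancel] at r
          have ih1 := ih (k + 1) (by omega) (by omega)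
          have ih0 := ih k (by omega) (by omega)
          refine mul_left_cancel₀ (hane (k + 1)) ?_
          linear_combination PP 0 * e + V 0 * r + (μ - b (k + 1)) * ih1 - a k * ih0
    have hV0ne : V 0 ≠ 0 := by
      intro h0
      apply hv0
      funext i
      have hk := key (i : ℕ) (by omega)
      rw [h0, zero_mul, hPP0] at hk
      have := mul_eq_zero.mp hk
      rcases this with h | h
      · exact absurd h (hlcne 0)
      · rw [Pi.zero_apply, ← hVc i]
        exact h
    have en := hEqN n (by omega)
    rw [show V (n + 1) = 0 from ext_ge v (by omega), mul_zero, add_zero] at en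
    have rn := hrec n
    have hfin : a n * (V 0 * PP (n + 1)) = 0 := by
      by_cases hn0 : n = 0
      · subst hn0
        rw [if_pos rfl, add_zero] at en rn
        linear_combination (-(V 0)) * rn - PP 0 * en
      · rw [if_neg hn0] at en rn
        have keyn := key n (le_refl n)
        have keyn1 := key (n - 1) (by omega)
        linear_combination (-(V 0)) * rn - PP 0 * en + (b n - μ) * keyn + a (n - 1) * keyn1
    have := mul_eq_zero.mp hfin
    rcases this with h | h
    · exact absurd h (hane n)
    · rcases mul_eq_zero.mp h with h' | h'
      · exact absurd h' hV0ne
      · exact h'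
  · intro hroot
    have hr' : PP (n + 1) = 0 := hroot
    refine ⟨fun i => PP (i : ℕ), ?_, ?_⟩
    · intro h
      have h0 := congrFun h ⟨0, by omega⟩
      rw [Pi.zero_apply] at h0
      exact hlcne 0 (by rw [← hPP0]; exact h0)
    · funext i
      rw [jac_mulVec, Pi.smul_apply, smul_eq_mul]
      have hx : ∀ k, k < n + 1 → ext n (fun j : Fin (n + 1) => PP (j : ℕ)) k = PP k :=
        fun k hk => by rw [ext_lt _ hk]
      have hx1 : ext n (fun j : Fin (n + 1) => PP (j : ℕ)) ((i : ℕ) + 1) = PP ((i : ℕ) + 1) := by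
        rcases Nat.lt_or_ge ((i : ℕ) + 1) (n + 1) with h | h
        · exact hx _ h
        · rw [ext_ge _ (by omega)]
          have hin : (i : ℕ) = n := by omega
          rw [hin, hr']
      by_cases hi0 : (i : ℕ) = 0
      · rw [if_pos hi0, hx _ i.isLt, hx1]
        have h0 := hrec (i : ℕ)
        rw [if_pos hi0] at h0
        linarith [h0]
      · rw [if_neg hi0, hx _ i.isLt, hx1, hx _ (show (i : ℕ) - 1 < n + 1 by omega)]
        have h0 := hrec (i : ℕ)
        rw [if_neg hi0] at h0
        linarith [h0]


lemma M_bilin (M : Polynomial ℝ →ₗ[ℝ] ℝ) {m m' : ℕ} (F G : ℕ → Polynomial ℝ)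
    (v : Fin m → ℝ) (w : Fin m' → ℝ) :
    M ((∑ i : Fin m, C (v i) * F (i : ℕ)) * (∑ j : Fin m', C (w j) * G (j : ℕ)))
      = ∑ i : Fin m, ∑ j : Fin m', v i * w j * M (F (i : ℕ) * G (j : ℕ)) := by
  rw [Finset.sum_mul_sum, map_sum]
  apply Finset.sum_congr rfl
  intro i _
  rw [map_sum]
  apply Finset.sum_congr rfl
  intro j _
  have hc : (C (v i) * F (i : ℕ)) * (C (w j) * G (j : ℕ))
      = C (v i * w j) * (F (i : ℕ) * G (j : ℕ)) := by
    rw [C_mul]; ring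
  rw [hc, M_C_mul]

lemma key_ineq {x u f g : ℝ} (hx : 1 < x) (hu : |u| < 1) :
    (x - |u| * Real.sqrt (x ^ 2 - 1)) * (f ^ 2 + (x ^ 2 - 1) * g ^ 2) ≤
      x * f ^ 2 + (x ^ 2 - 1) * (x * g ^ 2) - 2 * u * ((x ^ 2 - 1) * (f * g)) := by
  have hx1 : (0:ℝ) ≤ x ^ 2 - 1 := by nlinarith
  set s := Real.sqrt (x ^ 2 - 1) with hs
  have hs0 : 0 ≤ s := Real.sqrt_nonneg _
  have hs2 : s ^ 2 = x ^ 2 - 1 := Real.sq_sqrt hx1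
  have h1 : 0 ≤ |u| - u := sub_nonneg.mpr (le_abs_self u)
  have h2 : 0 ≤ |u| + u := by
    have := neg_abs_le u
    linarith
  rw [← hs2]
  nlinarith [mul_nonneg (mul_nonneg hs0 h1) (sq_nonneg (f + s * g)),
    mul_nonneg (mul_nonneg hs0 h2) (sq_nonneg (f - s * g))]

lemma key_pos {x u : ℝ} (hx : 1 < x) (hu : |u| < 1) :
    0 < x - |u| * Real.sqrt (x ^ 2 - 1) := by
  have hx1 : (0:ℝ) ≤ x ^ 2 - 1 := by nlinarith
  have hs0 : 0 ≤ Real.sqrt (x ^ 2 - 1) := Real.sqrt_nonneg _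
  have hs2 : Real.sqrt (x ^ 2 - 1) ^ 2 = x ^ 2 - 1 := Real.sq_sqrt hx1
  have hsx : Real.sqrt (x ^ 2 - 1) < x := by nlinarith
  nlinarith [mul_le_mul_of_nonneg_right hu.le hs0]

lemma wgt_meas (ℓ : ℕ) (ζ : ℝ) : Measurable (wgt ℓ ζ) := by
  unfold wgt
  apply Measurable.div_const
  exact (((measurable_id.pow_const 2).sub measurable_const).pow measurable_const).mul
    ((measurable_id.const_mul (-ζ)).exp)

lemma wgt1_eq (ζ : ℝ) {x : ℝ} (hx : 1 < x) :
    wgt 1 ζ x = (x ^ 2 - 1) * wgt 0 ζ x := by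
  unfold wgt
  have hx1 : (0:ℝ) < x ^ 2 - 1 := by nlinarith
  rw [show ((1:ℕ):ℝ) - 1 / 2 = 1 + (((0:ℕ):ℝ) - 1 / 2) by norm_num,
    Real.rpow_add hx1, Real.rpow_one]
  ring

lemma wgt0_pos {ζ : ℝ} (hK : 0 < besselK 1 ζ) {x : ℝ} (hx : 1 < x) :
    0 < wgt 0 ζ x := by
  unfold wgt
  have hx1 : (0:ℝ) < x ^ 2 - 1 := by nlinarith
  exact div_pos (mul_pos (Real.rpow_pos_of_pos hx1 _) (Real.exp_pos _)) hK

lemma integral_pos_of {ζ : ℝ} (hK : 0 < besselK 1 ζ)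
    (Q rp : Polynomial ℝ) (hrp : rp ≠ 0)
    (hint : IntegrableOn (fun x => Q.eval x * wgt 0 ζ x) (Set.Ioi 1))
    (h1 : ∀ x : ℝ, 1 < x → 0 ≤ Q.eval x)
    (h2 : ∀ x : ℝ, 1 < x → rp.eval x ≠ 0 → 0 < Q.eval x) :
    0 < ∫ x in Set.Ioi (1:ℝ), Q.eval x * wgt 0 ζ x := by
  have hnn : 0 ≤ᵐ[volume.restrict (Set.Ioi (1:ℝ))] fun x => Q.eval x * wgt 0 ζ x := by
    filter_upwards [ae_restrict_mem measurableSet_Ioi] with x hx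
    exact mul_nonneg (h1 x hx) (le_of_lt (wgt0_pos hK hx))
  rw [MeasureTheory.setIntegral_pos_iff_support_of_nonneg_ae hnn hint]
  have hsub : Set.Ioi (1:ℝ) \ {x | rp.IsRoot x} ⊆
      (Function.support fun x => Q.eval x * wgt 0 ζ x) ∩ Set.Ioi 1 := by
    rintro x ⟨hx1, hx2⟩
    refine ⟨?_, hx1⟩
    have hQ : 0 < Q.eval x := h2 x hx1 hx2
    exact ne_of_gt (mul_pos hQ (wgt0_pos hK hx1))
  refine lt_of_lt_of_le ?_ (measure_mono hsub)
  rw [measure_diff_null ((Polynomial.finite_setOf_isRoot hrp).measure_zero _),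
    Real.volume_Ioi]
  exact ENNReal.zero_lt_top

lemma jacobiSq_symm (a b : ℕ → ℝ) (n : ℕ) (i j : Fin (n + 1)) :
    jacobiSq a b n i j = jacobiSq a b n j i := by
  unfold jacobiSq
  split_ifs <;> first | omega | rfl | (congr 1 <;> omega) | (congr 1)

lemma jacEq (M : Polynomial ℝ →ₗ[ℝ] ℝ) (P : ℕ → Polynomial ℝ) (lc : ℕ → ℝ)
    (hdeg : ∀ n, (P n).natDegree = n) (hlc : ∀ n, (P n).leadingCoeff = lc n)
    (hlcne : ∀ n, lc n ≠ 0)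
    (horth : ∀ m n, M (P m * P n) = if m = n then (1:ℝ) else 0)
    (a b : ℕ → ℝ) (ha : ∀ n, a n = lc n / lc (n + 1)) (hb : ∀ n, b n = M (X * P n * P n))
    (m : ℕ) (i j : Fin (m + 1)) :
    jacobiSq a b m i j = M (X * P (i : ℕ) * P (j : ℕ)) := by
  rw [trival M P lc hdeg hlc hlcne horth]
  unfold jacobiSq
  split_ifs
  · exact hb (i : ℕ)
  · exact ha _
  · rfl

lemma sum_X_mul {m : ℕ} (P : ℕ → Polynomial ℝ) (v : Fin m → ℝ) :
    X * (∑ i : Fin m, C (v i) * P (i : ℕ)) = ∑ i : Fin m, C (v i) * (X * P (i : ℕ)) := by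
  rw [Finset.mul_sum]
  exact Finset.sum_congr rfl (fun i _ => by ring)

lemma qfSq (M : Polynomial ℝ →ₗ[ℝ] ℝ) (P : ℕ → Polynomial ℝ) (lc : ℕ → ℝ)
    (hdeg : ∀ n, (P n).natDegree = n) (hlc : ∀ n, (P n).leadingCoeff = lc n)
    (hlcne : ∀ n, lc n ≠ 0)
    (horth : ∀ m n, M (P m * P n) = if m = n then (1:ℝ) else 0)
    (a b : ℕ → ℝ) (ha : ∀ n, a n = lc n / lc (n + 1)) (hb : ∀ n, b n = M (X * P n * P n))
    (m : ℕ) (v : Fin (m + 1) → ℝ) :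
    dotProduct v ((jacobiSq a b m).mulVec v)
      = M (X * ((∑ i : Fin (m + 1), C (v i) * P (i : ℕ)) *
          (∑ j : Fin (m + 1), C (v j) * P (j : ℕ)))) := by
  have h2 : X * ((∑ i : Fin (m + 1), C (v i) * P (i : ℕ)) *
      (∑ j : Fin (m + 1), C (v j) * P (j : ℕ)))
      = (∑ i : Fin (m + 1), C (v i) * (X * P (i : ℕ))) *
        (∑ j : Fin (m + 1), C (v j) * P (j : ℕ)) := by
    rw [← sum_X_mul]; ring
  rw [h2, M_bilin M (fun i => X * P i) P v v]
  have hdot : dotProduct v ((jacobiSq a b m).mulVec v)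
      = ∑ i : Fin (m + 1), ∑ j : Fin (m + 1), v i * (jacobiSq a b m i j * v j) := by
    simp only [dotProduct, Matrix.mulVec, Finset.mul_sum]
  rw [hdot]
  apply Finset.sum_congr rfl
  intro i _
  apply Finset.sum_congr rfl
  intro j _
  rw [jacEq M P lc hdeg hlc hlcne horth a b ha hb m i j]
  ring

lemma qfId (M : Polynomial ℝ →ₗ[ℝ] ℝ) (P : ℕ → Polynomial ℝ)
    (horth : ∀ m n, M (P m * P n) = if m = n then (1:ℝ) else 0)
    (m : ℕ) (v : Fin m → ℝ) :
    M ((∑ i : Fin m, C (v i) * P (i : ℕ)) * (∑ j : Fin m, C (v j) * P (j : ℕ)))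
      = dotProduct v v := by
  rw [M_bilin M P P v v]
  have : ∀ i : Fin m, (∑ j : Fin m, v i * v j * M (P (i : ℕ) * P (j : ℕ))) = v i * v i := by
    intro i
    have hc : ∀ j : Fin m, v i * v j * M (P (i : ℕ) * P (j : ℕ))
        = if (j : ℕ) = (i : ℕ) then v i * v j else 0 := by
      intro j
      rw [horth]
      split_ifs <;> first | ring1 | omega
    rw [Finset.sum_congr rfl (fun j _ => hc j), fin_sum_ite (fun j => v i * v j),
      dif_pos i.isLt]
  rw [Finset.sum_congr rfl (fun i _ => this i)]
  rfl

lemma coef_ext (M : Polynomial ℝ →ₗ[ℝ] ℝ) (P : ℕ → Polynomial ℝ)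
    (horth : ∀ m n, M (P m * P n) = if m = n then (1:ℝ) else 0)
    {m : ℕ} {v : Fin m → ℝ}
    (hz : (∑ i : Fin m, C (v i) * P (i : ℕ)) = 0) : v = 0 := by
  funext j
  have h0 : M ((∑ i : Fin m, C (v i) * P (i : ℕ)) * P (j : ℕ)) = 0 := by
    rw [hz, zero_mul, map_zero]
  rw [Finset.sum_mul, map_sum] at h0
  have hc : ∀ i : Fin m, M (C (v i) * P (i : ℕ) * P (j : ℕ))
      = if (i : ℕ) = (j : ℕ) then v i else 0 := by
    intro i
    rw [mul_assoc, M_C_mul, horth]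
    split_ifs <;> first | ring1 | omega
  rw [Finset.sum_congr rfl (fun i _ => hc i), fin_sum_ite v, dif_pos j.isLt] at h0
  exact h0

lemma herm_of_symm {n' : Type*} [Fintype n'] {A : Matrix n' n' ℝ}
    (h : ∀ i j, A i j = A j i) : A.IsHermitian :=
  Matrix.ext fun i j => by rw [Matrix.conjTranspose_apply, star_trivial, h j i]

end Stmt19

set_option maxHeartbeats 1000000 in
open Stmt19 in
theorem stmt19
    (ζ : ℝ) (hζ : 0 < ζ)
    (P0 P1 : ℕ → Polynomial ℝ) (lc0 lc1 : ℕ → ℝ)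
    (hdeg0 : ∀ n, (P0 n).natDegree = n)
    (hdeg1 : ∀ n, (P1 n).natDegree = n)
    (hlc0 : ∀ n, (P0 n).leadingCoeff = lc0 n)
    (hlc1 : ∀ n, (P1 n).leadingCoeff = lc1 n)
    (hlc0pos : ∀ n, 0 < lc0 n)
    (hlc1pos : ∀ n, 0 < lc1 n)
    (horth0 : ∀ m n, (∫ x in Set.Ioi (1 : ℝ),
        (P0 m).eval x * (P0 n).eval x * wgt 0 ζ x) = if m = n then (1 : ℝ) else 0)
    (horth1 : ∀ m n, (∫ x in Set.Ioi (1 : ℝ),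
        (P1 m).eval x * (P1 n).eval x * wgt 1 ζ x) = if m = n then (1 : ℝ) else 0)
    (z0 z1 : ℕ → ℕ → ℝ)
    (hzfac0 : ∀ n, P0 n = C (lc0 n) * ∏ i ∈ Finset.Icc 1 n, (X - C (z0 n i)))
    (hzfac1 : ∀ n, P1 n = C (lc1 n) * ∏ i ∈ Finset.Icc 1 n, (X - C (z1 n i)))
    (hzgt0 : ∀ n i, 1 ≤ i → i ≤ n → 1 < z0 n i)
    (hzgt1 : ∀ n i, 1 ≤ i → i ≤ n → 1 < z1 n i)
    (hzmono0 : ∀ n i j, 1 ≤ i → i < j → j ≤ n → z0 n i < z0 n j)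
    (hzmono1 : ∀ n i j, 1 ≤ i → i < j → j ≤ n → z1 n i < z1 n j)
    (a0 a1 b0 b1 p q r : ℕ → ℝ)
    (ha0 : ∀ n, a0 n = lc0 n / lc0 (n + 1))
    (ha1 : ∀ n, a1 n = lc1 n / lc1 (n + 1))
    (hb0 : ∀ n, b0 n = ∫ x in Set.Ioi (1 : ℝ), x * ((P0 n).eval x) ^ 2 * wgt 0 ζ x)
    (hb1 : ∀ n, b1 n = ∫ x in Set.Ioi (1 : ℝ), x * ((P1 n).eval x) ^ 2 * wgt 1 ζ x)
    (hp : ∀ n, p n = lc0 n / lc1 n)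
    (hr : ∀ n, r (n + 1) = lc1 n / lc0 (n + 2))
    (hq : ∀ n, q n = ∫ x in Set.Ioi (1 : ℝ),
        (P0 (n + 1)).eval x * (P1 n).eval x * wgt 1 ζ x)
    (N : ℕ)
    (A0 A1 : Matrix (Fin (N + 2) ⊕ Fin (N + 1)) (Fin (N + 2) ⊕ Fin (N + 1)) ℝ)
    (hA0 : A0 = Matrix.fromBlocks (jacobiSq a0 b0 (N + 1)) 0 0 (jacobiSq a1 b1 N))
    (hA1 : A1 = Matrix.fromBlocks 0 (jacobiRect p q r N).transpose (jacobiRect p q r N) 0) :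
    A0.PosDef ∧
    (∀ μ : ℝ, (∃ v : Fin (N + 2) ⊕ Fin (N + 1) → ℝ,
        v ≠ 0 ∧ A0.mulVec v = μ • v) ↔
      ((P0 (N + 2)).eval μ = 0 ∨ (P1 (N + 1)).eval μ = 0)) ∧
    (∀ μ : ℝ, (∃ v : Fin (N + 2) ⊕ Fin (N + 1) → ℝ,
        v ≠ 0 ∧ A0.mulVec v = μ • v) → 1 < μ) ∧
    (∀ u : ℝ, -1 < u → u < 1 →
      (((1 - u ^ 2) ^ (-(1 / 2) : ℝ)) • (A0 - u • A1)).PosDef) := by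
  have hlcne0 : ∀ n, lc0 n ≠ 0 := fun n => ne_of_gt (hlc0pos n)
  have hlcne1 : ∀ n, lc1 n ≠ 0 := fun n => ne_of_gt (hlc1pos n)
  -- integrability of diagonal products
  have hdint0 : ∀ n, IntegrableOn
      (fun x => (P0 n).eval x * (P0 n).eval x * wgt 0 ζ x) (Set.Ioi 1) := by
    intro n
    by_contra hcon
    have h := horth0 n n
    rw [if_pos rfl, MeasureTheory.integral_undef hcon] at h
    exact zero_ne_one h
  have hdint1 : ∀ n, IntegrableOn
      (fun x => (P1 n).eval x * (P1 n).eval x * wgt 1 ζ x) (Set.Ioi 1) := by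
    intro n
    by_contra hcon
    have h := horth1 n n
    rw [if_pos rfl, MeasureTheory.integral_undef hcon] at h
    exact zero_ne_one h
  -- positivity of the Bessel normalisation
  have hK : 0 < besselK 1 ζ := by
    rcases lt_trichotomy (besselK 1 ζ) 0 with h | h | h
    · exfalso
      have h00 := horth0 0 0
      rw [if_pos rfl] at h00
      have hle : (∫ x in Set.Ioi (1:ℝ), (P0 0).eval x * (P0 0).eval x * wgt 0 ζ x) ≤ 0 := by
        apply MeasureTheory.integral_nonpos_of_ae
        filter_upwards [MeasureTheory.ae_restrict_mem measurableSet_Ioi] with x hx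
        have hx1 : (1:ℝ) < x := hx
        have hw : wgt 0 ζ x ≤ 0 := by
          unfold wgt
          apply div_nonpos_of_nonneg_of_nonpos
          · exact mul_nonneg (Real.rpow_nonneg (by nlinarith) _) (Real.exp_pos _).le
          · exact h.le
        exact mul_nonpos_iff.mpr (Or.inl ⟨mul_self_nonneg _, hw⟩)
      rw [h00] at hle
      linarith
    · exfalso
      have h00 := horth0 0 0
      rw [if_pos rfl] at h00
      have hw : ∀ x : ℝ, wgt 0 ζ x = 0 := by
        intro x; unfold wgt; rw [h, div_zero]
      simp only [hw, mul_zero, MeasureTheory.integral_zero] at h00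
      exact zero_ne_one h00
    · exact h
  -- integrability of cross products, weight 0
  have hcint0 : ∀ m n, IntegrableOn
      (fun x => (P0 m).eval x * (P0 n).eval x * wgt 0 ζ x) (Set.Ioi 1) := by
    intro m n
    apply MeasureTheory.Integrable.mono' ((hdint0 m).add (hdint0 n))
    · exact (((P0 m).continuous.mul (P0 n).continuous).measurable.mul
        (wgt_meas 0 ζ)).aestronglyMeasurable
    · filter_upwards [MeasureTheory.ae_restrict_mem measurableSet_Ioi] with x hx
      have hx1 : (1:ℝ) < x := hx
      have hw : 0 ≤ wgt 0 ζ x := (wgt0_pos hK hx1).le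
      rw [Real.norm_eq_abs, abs_mul, abs_of_nonneg hw]
      have h1 : |(P0 m).eval x * (P0 n).eval x| ≤
          (P0 m).eval x * (P0 m).eval x + (P0 n).eval x * (P0 n).eval x := by
        apply abs_le.mpr
        constructor
        · nlinarith [sq_nonneg ((P0 m).eval x + (P0 n).eval x)]
        · nlinarith [sq_nonneg ((P0 m).eval x - (P0 n).eval x)]
      calc |(P0 m).eval x * (P0 n).eval x| * wgt 0 ζ x
          ≤ ((P0 m).eval x * (P0 m).eval x + (P0 n).eval x * (P0 n).eval x) * wgt 0 ζ x :=
            mul_le_mul_of_nonneg_right h1 hw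
        _ = (P0 m).eval x * (P0 m).eval x * wgt 0 ζ x
            + (P0 n).eval x * (P0 n).eval x * wgt 0 ζ x := by ring
  -- integrability of all polynomials against weight 0
  have hintP : ∀ f : Polynomial ℝ,
      IntegrableOn (fun x => f.eval x * wgt 0 ζ x) (Set.Ioi 1) := by
    have hsingle : ∀ n, IntegrableOn (fun x => (P0 n).eval x * wgt 0 ζ x) (Set.Ioi 1) := by
      intro n
      have h := (hcint0 n 0).const_mul (1 / lc0 0)
      refine h.congr (Filter.Eventually.of_forall fun x => ?_)
      simp only [P_zero_eq P0 lc0 hdeg0 hlc0, Polynomial.eval_C]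
      field_simp
      rw [div_eq_iff (hlcne0 0)]; ring
    intro f
    obtain ⟨c, hc⟩ := expandP P0 lc0 hdeg0 hlc0 hlcne0 f.natDegree f le_rfl
    have heq : (fun x => f.eval x * wgt 0 ζ x)
        = fun x => ∑ i ∈ Finset.range (f.natDegree + 1),
            c i * ((P0 i).eval x * wgt 0 ζ x) := by
      funext x
      conv_lhs => rw [hc]
      rw [Polynomial.eval_finset_sum, Finset.sum_mul]
      apply Finset.sum_congr rfl
      intro i _
      rw [Polynomial.eval_mul, Polynomial.eval_C]
      ring
    rw [heq]
    apply MeasureTheory.integrable_finset_sum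
    intro i _
    exact (hsingle i).const_mul (c i)
  -- integrability against weight 1
  have hintP1 : ∀ f : Polynomial ℝ,
      IntegrableOn (fun x => f.eval x * wgt 1 ζ x) (Set.Ioi 1) := by
    intro f
    refine (hintP (((X:Polynomial ℝ)^2 - 1) * f)).congr_fun (fun x hx => ?_) measurableSet_Ioi
    have hx1 : (1:ℝ) < x := hx
    simp only [Polynomial.eval_mul, Polynomial.eval_sub, Polynomial.eval_pow,
      Polynomial.eval_X, Polynomial.eval_one]
    rw [wgt1_eq ζ hx1]
    ring
  -- the moment functionals
  set M0 : Polynomial ℝ →ₗ[ℝ] ℝ :=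
    { toFun := fun f => ∫ x in Set.Ioi (1:ℝ), f.eval x * wgt 0 ζ x
      map_add' := by
        intro f g
        simp only [Polynomial.eval_add, add_mul]
        exact MeasureTheory.integral_add (hintP f) (hintP g)
      map_smul' := by
        intro cc f
        simp only [Polynomial.eval_smul, smul_eq_mul, mul_assoc, RingHom.id_apply]
        exact MeasureTheory.integral_const_mul cc _ } with hM0def
  have hM0 : ∀ f : Polynomial ℝ, M0 f = ∫ x in Set.Ioi (1:ℝ), f.eval x * wgt 0 ζ x :=
    fun f => rfl
  set M1 : Polynomial ℝ →ₗ[ℝ] ℝ :=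
    M0.comp (LinearMap.mulLeft ℝ ((X:Polynomial ℝ)^2 - 1)) with hM1def
  have hM1c : ∀ f : Polynomial ℝ, M1 f = M0 (((X:Polynomial ℝ)^2 - 1) * f) := fun f => rfl
  have hM1 : ∀ f : Polynomial ℝ, M1 f = ∫ x in Set.Ioi (1:ℝ), f.eval x * wgt 1 ζ x := by
    intro f
    rw [hM1c, hM0]
    apply MeasureTheory.setIntegral_congr_fun measurableSet_Ioi
    intro x hx
    have hx1 : (1:ℝ) < x := hx
    simp only [Polynomial.eval_mul, Polynomial.eval_sub, Polynomial.eval_pow,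
      Polynomial.eval_X, Polynomial.eval_one]
    rw [wgt1_eq ζ hx1]
    ring
  have horthM0 : ∀ m n, M0 (P0 m * P0 n) = if m = n then (1:ℝ) else 0 := by
    intro m n
    rw [hM0, ← horth0 m n]
    congr 1
    funext x
    rw [Polynomial.eval_mul]
  have horthM1 : ∀ m n, M1 (P1 m * P1 n) = if m = n then (1:ℝ) else 0 := by
    intro m n
    rw [hM1, ← horth1 m n]
    congr 1
    funext x
    rw [Polynomial.eval_mul]
  have hb0M : ∀ n, b0 n = M0 (X * P0 n * P0 n) := by
    intro n
    rw [hb0 n, hM0]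
    congr 1
    funext x
    simp only [Polynomial.eval_mul, Polynomial.eval_X]
    ring
  have hb1M : ∀ n, b1 n = M1 (X * P1 n * P1 n) := by
    intro n
    rw [hb1 n, hM1]
    congr 1
    funext x
    simp only [Polynomial.eval_mul, Polynomial.eval_X]
    ring
  -- entries of the rectangular block
  have hXXdeg : ((X:Polynomial ℝ)^2 - 1).natDegree = 2 := by
    rw [show ((1:Polynomial ℝ)) = C 1 from (Polynomial.C_1).symm]
    exact Polynomial.natDegree_X_pow_sub_C
  have hrect : ∀ (i : Fin (N+1)) (j : Fin (N+2)),
      jacobiRect p q r N i j = M1 (P0 (j:ℕ) * P1 (i:ℕ)) := by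
    intro i j
    unfold jacobiRect
    split_ifs with h1 h2 h3
    · rw [h1, FC M1 P1 lc1 hdeg1 hlc1 hlcne1 horthM1 (le_of_eq (hdeg0 (i:ℕ))),
        coeff_P P0 lc0 hdeg0 hlc0, hp]
    · rw [h2, hq (i:ℕ), hM1]
      congr 1
      funext x
      rw [Polynomial.eval_mul]
    · rw [h3, hr (i:ℕ)]
      have hmul : M1 (P0 ((i:ℕ)+2) * P1 (i:ℕ))
          = M0 ((((X:Polynomial ℝ)^2 - 1) * P1 (i:ℕ)) * P0 ((i:ℕ)+2)) := by
        rw [hM1c]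
        congr 1
        ring
      rw [hmul, FC M0 P0 lc0 hdeg0 hlc0 hlcne0 horthM0
        (le_trans Polynomial.natDegree_mul_le (by rw [hXXdeg, hdeg1]; omega))]
      congr 1
      rw [sub_mul, one_mul, Polynomial.coeff_sub, Polynomial.coeff_X_pow_mul,
        coeff_P P1 lc1 hdeg1 hlc1,
        Polynomial.coeff_eq_zero_of_natDegree_lt (by rw [hdeg1]; omega), sub_zero]
    · rcases Nat.lt_or_ge (j:ℕ) (i:ℕ) with h | h
      · rw [orth_lt M1 P1 lc1 hdeg1 hlc1 hlcne1 horthM1 (by rw [hdeg0]; exact h)]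
      · have hj3 : (i:ℕ) + 2 < (j:ℕ) := by omega
        have hmul : M1 (P0 (j:ℕ) * P1 (i:ℕ))
            = M0 ((((X:Polynomial ℝ)^2 - 1) * P1 (i:ℕ)) * P0 (j:ℕ)) := by
          rw [hM1c]
          congr 1
          ring
        rw [hmul, orth_lt M0 P0 lc0 hdeg0 hlc0 hlcne0 horthM0
          (lt_of_le_of_lt (le_trans Polynomial.natDegree_mul_le
            (by rw [hXXdeg, hdeg1]; omega)) hj3)]
  -- splitting vectors
  have hsplit : ∀ v : (Fin (N+2) ⊕ Fin (N+1)) → ℝ,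
      v = Sum.elim (fun i => v (Sum.inl i)) (fun i => v (Sum.inr i)) := by
    intro v; funext i; cases i <;> rfl
  set F : ((Fin (N+2) ⊕ Fin (N+1)) → ℝ) → Polynomial ℝ :=
    fun v => ∑ i : Fin (N+2), C (v (Sum.inl i)) * P0 (i:ℕ) with hFdef
  set G : ((Fin (N+2) ⊕ Fin (N+1)) → ℝ) → Polynomial ℝ :=
    fun v => ∑ i : Fin (N+1), C (v (Sum.inr i)) * P1 (i:ℕ) with hGdef
  -- quadratic forms
  have hQF0 : ∀ v, dotProduct v (A0.mulVec v)
      = M0 (X * (F v * F v)) + M1 (X * (G v * G v)) := by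
    intro v
    rw [hA0]
    conv_lhs => rw [hsplit v]
    rw [Matrix.fromBlocks_mulVec]
    simp only [Sum.elim_comp_inl, Sum.elim_comp_inr]
    rw [Matrix.zero_mulVec, Matrix.zero_mulVec, add_zero,
      zero_add, sumElim_dotProduct_sumElim]
    rw [qfSq M0 P0 lc0 hdeg0 hlc0 hlcne0 horthM0 a0 b0 ha0 hb0M (N+1)
        (fun i => v (Sum.inl i)),
      qfSq M1 P1 lc1 hdeg1 hlc1 hlcne1 horthM1 a1 b1 ha1 hb1M N
        (fun i => v (Sum.inr i))]
  have hQF1 : ∀ v, dotProduct v (A1.mulVec v) = 2 * M1 (F v * G v) := by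
    intro v
    rw [hA1]
    conv_lhs => rw [hsplit v]
    rw [Matrix.fromBlocks_mulVec]
    simp only [Sum.elim_comp_inl, Sum.elim_comp_inr]
    rw [Matrix.zero_mulVec, Matrix.zero_mulVec, add_zero,
      zero_add, sumElim_dotProduct_sumElim]
    have hbil : M1 (F v * G v) = ∑ j : Fin (N+2), ∑ i : Fin (N+1),
        v (Sum.inl j) * v (Sum.inr i) * M1 (P0 (j:ℕ) * P1 (i:ℕ)) := by
      rw [hFdef, hGdef]
      exact M_bilin M1 P0 P1 (fun j => v (Sum.inl j)) (fun i => v (Sum.inr i))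
    have h1 : dotProduct (fun i => v (Sum.inl i))
        ((jacobiRect p q r N).transpose.mulVec (fun i => v (Sum.inr i)))
        = ∑ j : Fin (N+2), ∑ i : Fin (N+1),
            v (Sum.inl j) * v (Sum.inr i) * M1 (P0 (j:ℕ) * P1 (i:ℕ)) := by
      simp only [dotProduct, Matrix.mulVec, Finset.mul_sum, Matrix.transpose_apply]
      apply Finset.sum_congr rfl
      intro j _
      apply Finset.sum_congr rfl
      intro i _
      rw [hrect i j]
      ring
    have h2 : dotProduct (fun i => v (Sum.inr i))
        ((jacobiRect p q r N).mulVec (fun i => v (Sum.inl i)))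
        = ∑ j : Fin (N+2), ∑ i : Fin (N+1),
            v (Sum.inl j) * v (Sum.inr i) * M1 (P0 (j:ℕ) * P1 (i:ℕ)) := by
      simp only [dotProduct, Matrix.mulVec, Finset.mul_sum]
      rw [Finset.sum_comm]
      apply Finset.sum_congr rfl
      intro j _
      apply Finset.sum_congr rfl
      intro i _
      rw [hrect i j]
      ring
    rw [h1, h2, hbil]
    ring
  have hQFid : ∀ v, dotProduct v v = M0 (F v * F v) + M1 (G v * G v) := by
    intro v
    conv_lhs => rw [hsplit v]
    rw [sumElim_dotProduct_sumElim]
    rw [← qfId M0 P0 horthM0 (N+2) (fun i => v (Sum.inl i)),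
      ← qfId M1 P1 horthM1 (N+1) (fun i => v (Sum.inr i))]
  have hFGne : ∀ v : (Fin (N+2) ⊕ Fin (N+1)) → ℝ, v ≠ 0 → F v ≠ 0 ∨ G v ≠ 0 := by
    intro v hv
    by_contra hcon
    rw [not_or, not_ne_iff, not_ne_iff] at hcon
    obtain ⟨hF0, hG0⟩ := hcon
    apply hv
    have hxz := coef_ext M0 P0 horthM0 (by rw [hFdef] at hF0; exact hF0)
    have hyz := coef_ext M1 P1 horthM1 (by rw [hGdef] at hG0; exact hG0)
    funext i
    cases i with
    | inl i => exact congrFun hxz i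
    | inr i => exact congrFun hyz i
  -- the main positivity estimate
  have hpos : ∀ u : ℝ, |u| < 1 → ∀ v : (Fin (N+2) ⊕ Fin (N+1)) → ℝ, v ≠ 0 →
      0 < dotProduct v ((A0 - u • A1).mulVec v) := by
    intro u hu v hv
    have hqf : dotProduct v ((A0 - u • A1).mulVec v)
        = M0 (X * (F v * F v) + ((X:Polynomial ℝ)^2 - 1) * (X * (G v * G v))
            - C (2*u) * (((X:Polynomial ℝ)^2 - 1) * (F v * G v))) := by
      rw [Matrix.sub_mulVec, Matrix.smul_mulVec, dotProduct_sub,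
        dotProduct_smul, hQF0 v, hQF1 v, smul_eq_mul]
      rw [map_sub, map_add, M_C_mul, ← hM1c, ← hM1c]
      ring
    rw [hqf, hM0]
    have hptbound : ∀ x : ℝ, 1 < x →
        (x - |u| * Real.sqrt (x ^ 2 - 1)) *
            (((F v).eval x) ^ 2 + (x ^ 2 - 1) * ((G v).eval x) ^ 2) ≤
          Polynomial.eval x (X * (F v * F v) + ((X:Polynomial ℝ)^2 - 1) * (X * (G v * G v))
            - C (2*u) * (((X:Polynomial ℝ)^2 - 1) * (F v * G v))) := by
      intro x hx
      have hk := key_ineq (f := (F v).eval x) (g := (G v).eval x) hx hu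
      simp only [Polynomial.eval_add, Polynomial.eval_sub, Polynomial.eval_mul,
        Polynomial.eval_pow, Polynomial.eval_X, Polynomial.eval_one, Polynomial.eval_C]
      refine le_trans hk (le_of_eq ?_)
      ring
    rcases hFGne v hv with hne | hne
    · apply integral_pos_of hK _ (F v) hne (hintP _)
      · intro x hx
        have hp2 := key_pos (u := u) hx hu
        refine le_trans ?_ (hptbound x hx)
        have hx2 : (0:ℝ) ≤ x ^ 2 - 1 := by nlinarith
        exact mul_nonneg hp2.le
          (add_nonneg (sq_nonneg _) (mul_nonneg hx2 (sq_nonneg _)))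
      · intro x hx hfx
        have hp2 := key_pos (u := u) hx hu
        refine lt_of_lt_of_le ?_ (hptbound x hx)
        have hx2 : (0:ℝ) ≤ x ^ 2 - 1 := by nlinarith
        have hfp : 0 < ((F v).eval x) ^ 2 := by positivity
        exact mul_pos hp2
          (add_pos_of_pos_of_nonneg hfp (mul_nonneg hx2 (sq_nonneg _)))
    · apply integral_pos_of hK _ (G v) hne (hintP _)
      · intro x hx
        have hp2 := key_pos (u := u) hx hu
        refine le_trans ?_ (hptbound x hx)
        have hx2 : (0:ℝ) ≤ x ^ 2 - 1 := by nlinarith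
        exact mul_nonneg hp2.le
          (add_nonneg (sq_nonneg _) (mul_nonneg hx2 (sq_nonneg _)))
      · intro x hx hgx
        have hp2 := key_pos (u := u) hx hu
        refine lt_of_lt_of_le ?_ (hptbound x hx)
        have hx2 : (0:ℝ) < x ^ 2 - 1 := by nlinarith
        have hgp : 0 < ((G v).eval x) ^ 2 := by positivity
        exact mul_pos hp2
          (add_pos_of_nonneg_of_pos (sq_nonneg _) (mul_pos hx2 hgp))
  -- strict gap above 1 for the quadratic form
  have hposdiff : ∀ v : (Fin (N+2) ⊕ Fin (N+1)) → ℝ, v ≠ 0 →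
      dotProduct v v < dotProduct v (A0.mulVec v) := by
    intro v hv
    have hqf : dotProduct v (A0.mulVec v) - dotProduct v v
        = M0 ((X * (F v * F v) + ((X:Polynomial ℝ)^2 - 1) * (X * (G v * G v)))
            - ((F v * F v) + ((X:Polynomial ℝ)^2 - 1) * (G v * G v))) := by
      rw [hQF0 v, hQFid v, map_sub, map_add, map_add, ← hM1c, ← hM1c]
    have hlt : 0 < dotProduct v (A0.mulVec v) - dotProduct v v := by
      rw [hqf, hM0]
      have hptb : ∀ x : ℝ, 1 < x →
          (x - 1) * (((F v).eval x) ^ 2 + (x ^ 2 - 1) * ((G v).eval x) ^ 2) =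
            Polynomial.eval x ((X * (F v * F v) + ((X:Polynomial ℝ)^2 - 1) * (X * (G v * G v)))
              - ((F v * F v) + ((X:Polynomial ℝ)^2 - 1) * (G v * G v))) := by
        intro x hx
        simp only [Polynomial.eval_add, Polynomial.eval_sub, Polynomial.eval_mul,
          Polynomial.eval_pow, Polynomial.eval_X, Polynomial.eval_one]
        ring
      rcases hFGne v hv with hne | hne
      · apply integral_pos_of hK _ (F v) hne (hintP _)
        · intro x hx
          rw [← hptb x hx]
          have hx2 : (0:ℝ) ≤ x ^ 2 - 1 := by nlinarith
          exact mul_nonneg (by linarith)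
            (add_nonneg (sq_nonneg _) (mul_nonneg hx2 (sq_nonneg _)))
        · intro x hx hfx
          rw [← hptb x hx]
          have hx2 : (0:ℝ) ≤ x ^ 2 - 1 := by nlinarith
          have hfp : 0 < ((F v).eval x) ^ 2 := by positivity
          exact mul_pos (by linarith)
            (add_pos_of_pos_of_nonneg hfp (mul_nonneg hx2 (sq_nonneg _)))
      · apply integral_pos_of hK _ (G v) hne (hintP _)
        · intro x hx
          rw [← hptb x hx]
          have hx2 : (0:ℝ) ≤ x ^ 2 - 1 := by nlinarith
          exact mul_nonneg (by linarith)
            (add_nonneg (sq_nonneg _) (mul_nonneg hx2 (sq_nonneg _)))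
        · intro x hx hgx
          rw [← hptb x hx]
          have hx2 : (0:ℝ) < x ^ 2 - 1 := by nlinarith
          have hgp : 0 < ((G v).eval x) ^ 2 := by positivity
          exact mul_pos (by linarith)
            (add_pos_of_nonneg_of_pos (sq_nonneg _) (mul_pos hx2 hgp))
    linarith
  -- symmetry
  have hsymm0 : ∀ i j, A0 i j = A0 j i := by
    intro i j
    rw [hA0]
    cases i <;> cases j <;>
      simp only [Matrix.fromBlocks_apply₁₁, Matrix.fromBlocks_apply₁₂,
        Matrix.fromBlocks_apply₂₁, Matrix.fromBlocks_apply₂₂, Matrix.zero_apply]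
    · exact jacobiSq_symm a0 b0 (N+1) _ _
    · exact jacobiSq_symm a1 b1 N _ _
  have hsymm1 : ∀ i j, A1 i j = A1 j i := by
    intro i j
    rw [hA1]
    cases i <;> cases j <;>
      simp only [Matrix.fromBlocks_apply₁₁, Matrix.fromBlocks_apply₁₂,
        Matrix.fromBlocks_apply₂₁, Matrix.fromBlocks_apply₂₂, Matrix.zero_apply,
        Matrix.transpose_apply]
  have hstar : ∀ v : (Fin (N+2) ⊕ Fin (N+1)) → ℝ, star v = v := by
    intro v; funext i; simp
  -- eigenvalue characterisations of the blocks
  have e0 : ∀ μ : ℝ, (∃ w : Fin (N+2) → ℝ, w ≠ 0 ∧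
      (jacobiSq a0 b0 (N+1)).mulVec w = μ • w) ↔ (P0 (N+2)).eval μ = 0 := fun μ =>
    eig_iff M0 P0 lc0 hdeg0 hlc0 hlcne0 horthM0 a0 b0 ha0 hb0M (N+1) μ
  have e1 : ∀ μ : ℝ, (∃ w : Fin (N+1) → ℝ, w ≠ 0 ∧
      (jacobiSq a1 b1 N).mulVec w = μ • w) ↔ (P1 (N+1)).eval μ = 0 := fun μ =>
    eig_iff M1 P1 lc1 hdeg1 hlc1 hlcne1 horthM1 a1 b1 ha1 hb1M N μ
  refine ⟨?_, ?_, ?_, ?_⟩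
  · -- A0 positive definite
    refine Matrix.PosDef.of_dotProduct_mulVec_pos (herm_of_symm hsymm0) ?_
    intro v hv
    rw [hstar v]
    have h := hpos 0 (by norm_num) v hv
    rw [zero_smul, sub_zero] at h
    exact h
  · -- eigenvalue characterisation
    intro μ
    constructor
    · rintro ⟨v, hv0, hv⟩
      rw [hA0] at hv
      conv_lhs at hv => rw [hsplit v]
      rw [Matrix.fromBlocks_mulVec] at hv
      simp only [Sum.elim_comp_inl, Sum.elim_comp_inr] at hv
      rw [Matrix.zero_mulVec, Matrix.zero_mulVec, add_zero, zero_add] at hv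
      have hvl : (jacobiSq a0 b0 (N+1)).mulVec (fun i => v (Sum.inl i))
          = μ • (fun i => v (Sum.inl i)) := by
        funext i
        have := congrFun hv (Sum.inl i)
        simpa using this
      have hvr : (jacobiSq a1 b1 N).mulVec (fun i => v (Sum.inr i))
          = μ • (fun i => v (Sum.inr i)) := by
        funext i
        have := congrFun hv (Sum.inr i)
        simpa using this
      by_cases hx : (fun i => v (Sum.inl i)) = 0
      · have hy : (fun i => v (Sum.inr i)) ≠ 0 := by
          intro hy
          apply hv0
          funext i
          cases i with
          | inl i => exact congrFun hx i
          | inr i => exact congrFun hy i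
        exact Or.inr ((e1 μ).mp ⟨_, hy, hvr⟩)
      · exact Or.inl ((e0 μ).mp ⟨_, hx, hvl⟩)
    · rintro (h | h)
      · obtain ⟨w, hw0, hw⟩ := (e0 μ).mpr h
        refine ⟨Sum.elim w 0, ?_, ?_⟩
        · intro hz
          apply hw0
          funext i
          exact congrFun hz (Sum.inl i)
        · rw [hA0, Matrix.fromBlocks_mulVec]
          simp only [Sum.elim_comp_inl, Sum.elim_comp_inr]
          rw [Matrix.zero_mulVec, Matrix.mulVec_zero, Matrix.zero_mulVec, add_zero,
            zero_add]
          funext i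
          cases i with
          | inl i =>
            have := congrFun hw i
            simpa using this
          | inr i => simp
      · obtain ⟨w, hw0, hw⟩ := (e1 μ).mpr h
        refine ⟨Sum.elim 0 w, ?_, ?_⟩
        · intro hz
          apply hw0
          funext i
          exact congrFun hz (Sum.inr i)
        · rw [hA0, Matrix.fromBlocks_mulVec]
          simp only [Sum.elim_comp_inl, Sum.elim_comp_inr]
          rw [Matrix.mulVec_zero, Matrix.zero_mulVec, Matrix.zero_mulVec, add_zero,
            zero_add]
          funext i
          cases i with
          | inl i => simp
          | inr i =>
            have := congrFun hw i
            simpa using this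
  · -- eigenvalues exceed 1
    rintro μ ⟨v, hv0, hv⟩
    have hS : 0 < dotProduct v v := by
      rcases Function.ne_iff.mp hv0 with ⟨i, hi⟩
      have : (0:ℝ) < v i * v i := by
        rcases lt_or_gt_of_ne (show v i ≠ 0 by simpa using hi) with h | h
        · nlinarith
        · nlinarith
      apply Finset.sum_pos' (fun j _ => mul_self_nonneg (v j)) ⟨i, Finset.mem_univ i, this⟩
    have hA0v : dotProduct v (A0.mulVec v) = μ * dotProduct v v := by
      rw [hv, dotProduct_smul, smul_eq_mul]
    have := hposdiff v hv0
    rw [hA0v] at this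
    nlinarith
  · -- positive definiteness of the rotated matrix
    intro u hu1 hu2
    have huabs : |u| < 1 := abs_lt.mpr ⟨hu1, hu2⟩
    have hγ : 0 < ((1:ℝ) - u ^ 2) ^ (-(1/2) : ℝ) :=
      Real.rpow_pos_of_pos (by nlinarith) _
    refine Matrix.PosDef.of_dotProduct_mulVec_pos ?_ ?_
    · apply herm_of_symm
      intro i j
      simp only [Matrix.smul_apply, Matrix.sub_apply, smul_eq_mul]
      rw [hsymm0 i j, hsymm1 i j]
    · intro v hv
      rw [hstar v, Matrix.smul_mulVec, dotProduct_smul, smul_eq_mul]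
      exact mul_pos hγ (hpos u huabs v hv)
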